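/- The restriction of the F-linear map ψ ↦ ψ_{s,t} to the subspace F[λ,λ⁻¹]_{s,t} is an invertible (bijective) linear map from F[λ,λ⁻¹]_{s,t} to itself. -/

import Mathlib

open LaurentPolynomial

noncomputable section

/-- The Laurent polynomial `ψ(c·λ)`. -/
noncomputable def lscale {F : Type*} [Field F] (c : F) (ψ : LaurentPolynomial F) :
    LaurentPolynomial F :=
  Finsupp.sum ψ.coeff fun i a => (a * c ^ i) • (T i : LaurentPolynomial F)

/-- The map `ψ ↦ ψ_{s,t}` of Definition 2.4:
`ψ_{s,t}(λ) = ψ(q⁻¹λ) − (q^{−2s}+q^{−2t})ψ(qλ) + q^{−2s−2t}ψ(q³λ)`. -/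
noncomputable def adu {F : Type*} [Field F] (q : F) (s t : ℤ) (ψ : LaurentPolynomial F) :
    LaurentPolynomial F :=
  lscale q⁻¹ ψ - (q ^ (-2*s) + q ^ (-2*t)) • lscale q ψ + q ^ (-2*s-2*t) • lscale (q^3) ψ

/-- `F[λ,λ⁻¹]_{s,t}`: the span of the monomials `λ^i`, `i ∉ {s,t}`. -/
noncomputable def lstSpan (F : Type*) [Field F] (s t : ℤ) :
    Submodule F (LaurentPolynomial F) :=
  Submodule.span F {ψ : LaurentPolynomial F | ∃ i : ℤ, i ≠ s ∧ i ≠ t ∧ ψ = T i}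

/-- `x^i` for `i : ℤ`, interpreting negative powers via a designated inverse `y`. -/
def zpow2 {B : Type*} [Monoid B] (x y : B) (i : ℤ) : B :=
  if 0 ≤ i then x ^ i.toNat else y ^ (-i).toNat

/-- Evaluation `ψ(c·x)` of a Laurent polynomial `ψ`, where `y` plays the role of `x⁻¹`. -/
noncomputable def leval {F : Type*} [Field F] {B : Type*} [Ring B] [Algebra F B]
    (ψ : LaurentPolynomial F) (c : F) (x y : B) : B :=
  Finsupp.sum ψ.coeff fun i a => (a * c ^ i) • zpow2 x y i

/-- The eigenvalue of `adu q s t` on `T i`. -/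
noncomputable def aduC {F : Type*} [Field F] (q : F) (s t : ℤ) (i : ℤ) : F :=
  q ^ (-i) - (q ^ (-2*s) + q ^ (-2*t)) * q ^ i + q ^ (-2*s-2*t) * q ^ (3*i)

lemma lscale_single {F : Type*} [Field F] (c : F) (i : ℤ) (a : F) :
    lscale c (AddMonoidAlgebra.single i a : LaurentPolynomial F)
      = AddMonoidAlgebra.single i (a * c ^ i) := by
  rw [lscale, AddMonoidAlgebra.coeff_single, Finsupp.sum_single_index (by simp)]
  rw [T, AddMonoidAlgebra.smul_single, smul_eq_mul, mul_one]

lemma lscale_add {F : Type*} [Field F] (c : F) (x y : LaurentPolynomial F) :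
    lscale c (x + y) = lscale c x + lscale c y := by
  unfold lscale
  rw [AddMonoidAlgebra.coeff_add]
  exact Finsupp.sum_add_index' (by simp) (by intros; rw [add_mul, add_smul])

lemma adu_single {F : Type*} [Field F] (q : F) (s t : ℤ) (i : ℤ) (a : F) :
    adu q s t (AddMonoidAlgebra.single i a : LaurentPolynomial F)
      = AddMonoidAlgebra.single i (a * aduC q s t i) := by
  rw [adu, lscale_single, lscale_single, lscale_single, AddMonoidAlgebra.smul_single,
    AddMonoidAlgebra.smul_single, ← AddMonoidAlgebra.single_sub, ← AddMonoidAlgebra.single_add]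
  congr 1
  rw [aduC, inv_zpow, ← zpow_neg, show (q ^ 3 : F) = q ^ (3 : ℤ) from (zpow_natCast q 3).symm,
    ← zpow_mul, smul_eq_mul, smul_eq_mul, show ((3:ℤ) * i) = 3 * i from rfl]
  ring

lemma adu_add {F : Type*} [Field F] (q : F) (s t : ℤ) (x y : LaurentPolynomial F) :
    adu q s t (x + y) = adu q s t x + adu q s t y := by
  simp only [adu, lscale_add, smul_add]
  abel

lemma adu_eq_sum {F : Type*} [Field F] (q : F) (s t : ℤ) (x : LaurentPolynomial F) :
    adu q s t x = Finsupp.sum x.coeff fun i a => AddMonoidAlgebra.single i (a * aduC q s t i) := by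
  induction x using AddMonoidAlgebra.induction with
  | zero => simp [adu, lscale]
  | single_add i a x hix ha0 ih =>
      rw [adu_add, ih, adu_single, AddMonoidAlgebra.coeff_add, AddMonoidAlgebra.coeff_single,
        Finsupp.sum_add_index' (by simp) (by intros; rw [add_mul, AddMonoidAlgebra.single_add]),
        Finsupp.sum_single_index (by simp)]

lemma adu_apply {F : Type*} [Field F] (q : F) (s t : ℤ) (x : LaurentPolynomial F) (j : ℤ) :
    (adu q s t x).coeff j = x.coeff j * aduC q s t j := by
  rw [adu_eq_sum, AddMonoidAlgebra.coeff_finsuppSum, Finsupp.sum_apply]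
  simp only [AddMonoidAlgebra.coeff_single, Finsupp.single_apply]
  rw [Finsupp.sum_ite_eq' x.coeff j (fun i a => a * aduC q s t i)]
  split_ifs with h
  · rfl
  · rw [Finsupp.notMem_support_iff.mp h, zero_mul]

lemma zpow_ne_one {F : Type*} [Field F] (q : F) (hq0 : q ≠ 0)
    (hq : ∀ n : ℕ, 0 < n → q ^ n ≠ 1) (m : ℤ) (hm : m ≠ 0) : q ^ m ≠ 1 := by
  rcases lt_trichotomy m 0 with h | h | h
  · intro hc
    have h1 : q ^ (-m) ≠ 1 := by
      rw [show (-m) = ((-m).toNat : ℤ) by omega, zpow_natCast]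
      exact hq _ (by omega)
    apply h1
    have := zpow_add₀ hq0 m (-m)
    rw [add_neg_cancel, zpow_zero, hc, one_mul] at this
    exact this.symm
  · exact absurd h hm
  · rw [show m = (m.toNat : ℤ) by omega, zpow_natCast]
    exact hq _ (by omega)

lemma aduC_factor {F : Type*} [Field F] (q : F) (hq0 : q ≠ 0) (s t : ℤ) (j : ℤ) :
    aduC q s t j = q ^ (-j-2*s-2*t) * ((q ^ (2*s) - q ^ (2*j)) * (q ^ (2*t) - q ^ (2*j))) := by
  have k1 : (q^(2*s) - q^(2*j)) * (q^(2*t) - q^(2*j))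
      = q^(2*s)*q^(2*t) - q^(2*s)*q^(2*j) - q^(2*j)*q^(2*t) + q^(2*j)*q^(2*j) := by ring
  rw [aduC, k1, ← zpow_add₀ hq0 (2*s) (2*t), ← zpow_add₀ hq0 (2*s) (2*j),
    ← zpow_add₀ hq0 (2*j) (2*t), ← zpow_add₀ hq0 (2*j) (2*j), mul_add, mul_sub, mul_sub,
    ← zpow_add₀ hq0 (-j-2*s-2*t) (2*s+2*t), ← zpow_add₀ hq0 (-j-2*s-2*t) (2*s+2*j),
    ← zpow_add₀ hq0 (-j-2*s-2*t) (2*j+2*t), ← zpow_add₀ hq0 (-j-2*s-2*t) (2*j+2*j),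
    show (-j-2*s-2*t) + (2*s+2*t) = -j by ring, show (-j-2*s-2*t) + (2*s+2*j) = j-2*t by ring,
    show (-j-2*s-2*t) + (2*j+2*t) = j-2*s by ring,
    show (-j-2*s-2*t) + (2*j+2*j) = 3*j-2*s-2*t by ring,
    add_mul, ← zpow_add₀ hq0 (-2*s) j, ← zpow_add₀ hq0 (-2*t) j,
    ← zpow_add₀ hq0 (-2*s-2*t) (3*j), show (-2*s) + j = j-2*s by ring,
    show (-2*t) + j = j-2*t by ring, show (-2*s-2*t) + (3*j) = 3*j-2*s-2*t by ring]
  ring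

lemma aduC_ne_zero {F : Type*} [Field F] (q : F) (hq0 : q ≠ 0)
    (hq : ∀ n : ℕ, 0 < n → q ^ n ≠ 1) (s t : ℤ) (j : ℤ) (hjs : j ≠ s) (hjt : j ≠ t) :
    aduC q s t j ≠ 0 := by
  rw [aduC_factor q hq0]
  have key : ∀ m : ℤ, j ≠ m → q ^ (2*m) - q ^ (2*j) ≠ 0 := by
    intro m hjm h
    have h2 : q ^ (2*m) = q ^ (2*j) := sub_eq_zero.mp h
    have h3 : q ^ (2*m-2*j) = 1 := by
      rw [zpow_sub₀ hq0, h2, div_self (zpow_ne_zero _ hq0)]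
    exact zpow_ne_one q hq0 hq (2*m-2*j) (by omega) h3
  exact mul_ne_zero (zpow_ne_zero _ hq0) (mul_ne_zero (key s (by omega)) (key t (by omega)))

lemma lstSpan_eq {F : Type*} [Field F] (s t : ℤ) :
    lstSpan F s t = (Finsupp.supported F F {i : ℤ | i ≠ s ∧ i ≠ t}).map
      ((AddMonoidAlgebra.coeffLinearEquiv F (S := F) (M := ℤ)).symm :
        (ℤ →₀ F) →ₗ[F] LaurentPolynomial F) := by
  rw [Finsupp.supported_eq_span_single, Submodule.map_span, lstSpan]
  congr 1
  ext ψ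
  constructor
  · rintro ⟨i, h1, h2, rfl⟩
    exact ⟨_, ⟨i, ⟨h1, h2⟩, rfl⟩, rfl⟩
  · rintro ⟨_, ⟨i, ⟨h1, h2⟩, rfl⟩, rfl⟩
    exact ⟨i, h1, h2, rfl⟩

theorem stmt6 {F : Type*} [Field F] (q : F) (hq0 : q ≠ 0)
    (hq : ∀ n : ℕ, 0 < n → q ^ n ≠ 1) (s t : ℤ) (hst : s ≠ t) :
    Set.BijOn (adu q s t) (lstSpan F s t : Set (LaurentPolynomial F))
      (lstSpan F s t : Set (LaurentPolynomial F)) := by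
  have hmem : ∀ x : LaurentPolynomial F,
      x ∈ (lstSpan F s t : Set (LaurentPolynomial F)) ↔ ∀ j, j = s ∨ j = t → x.coeff j = 0 := by
    intro x
    rw [SetLike.mem_coe, lstSpan_eq, Submodule.mem_map_equiv, LinearEquiv.symm_symm]
    change x.coeff ∈ Finsupp.supported F F {i : ℤ | i ≠ s ∧ i ≠ t} ↔ _
    rw [Finsupp.mem_supported]
    constructor
    · intro h j hj
      by_contra hxj
      rcases hj with rfl | rfl
      · exact (h (Finsupp.mem_support_iff.mpr hxj)).1 rfl
      · exact (h (Finsupp.mem_support_iff.mpr hxj)).2 rfl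
    · intro h j hj
      rw [Finset.mem_coe, Finsupp.mem_support_iff] at hj
      constructor
      · intro hjs; exact hj (h j (Or.inl hjs))
      · intro hjt; exact hj (h j (Or.inr hjt))
  refine ⟨?_, ?_, ?_⟩
  · intro x hx
    rw [hmem] at hx ⊢
    intro j hj
    rw [adu_apply, hx j hj, zero_mul]
  · intro x hx y hy hxy
    rw [hmem] at hx hy
    ext j
    by_cases hj : j = s ∨ j = t
    · rw [hx j hj, hy j hj]
    · push_neg at hj
      have := congrFun (congrArg (fun f : LaurentPolynomial F => (f.coeff : ℤ → F)) hxy) j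
      simp only [adu_apply] at this
      exact mul_right_cancel₀ (aduC_ne_zero q hq0 hq s t j hj.1 hj.2) this
  · intro ψ hψ
    rw [hmem] at hψ
    refine ⟨Finsupp.sum ψ.coeff (fun i a => AddMonoidAlgebra.single i (a * (aduC q s t i)⁻¹)), ?_, ?_⟩
    · rw [hmem]
      intro j hj
      rw [AddMonoidAlgebra.coeff_finsuppSum, Finsupp.sum_apply]
      simp only [AddMonoidAlgebra.coeff_single, Finsupp.single_apply]
      rw [Finsupp.sum_ite_eq' ψ.coeff j (fun i a => a * (aduC q s t i)⁻¹)]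
      split_ifs with h
      · rw [hψ j hj, zero_mul]
      · rfl
    · ext j
      rw [adu_apply, AddMonoidAlgebra.coeff_finsuppSum, Finsupp.sum_apply]
      simp only [AddMonoidAlgebra.coeff_single, Finsupp.single_apply]
      rw [Finsupp.sum_ite_eq' ψ.coeff j (fun i a => a * (aduC q s t i)⁻¹)]
      split_ifs with h
      · by_cases hj : j = s ∨ j = t
        · rw [hψ j hj, zero_mul, zero_mul]
        · push_neg at hj
          rw [mul_assoc, inv_mul_cancel₀ (aduC_ne_zero q hq0 hq s t j hj.1 hj.2), mul_one]
      · rw [zero_mul, (Finsupp.notMem_support_iff.mp h)]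

end
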